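/- With β₂ = 3√3/π, for all real x ≥ 0 and all y with 0 ≤ y ≤ π/3, arctan(tanh(x) · tan(y)) ≤ β₂ · x · y. -/

import Mathlib

open Real

lemma sinh_le_mul_cosh {x : ℝ} (hx : 0 ≤ x) : Real.sinh x ≤ x * Real.cosh x := by
  have h : ∀ z ∈ Set.Ici (0:ℝ), 0 ≤ deriv (fun t => t * Real.cosh t - Real.sinh t) z := by
    intro z hz
    have hd : deriv (fun t => t * Real.cosh t - Real.sinh t) z = z * Real.sinh z := by
      have : HasDerivAt (fun t => t * Real.cosh t - Real.sinh t)
          (1 * Real.cosh z + z * Real.sinh z - Real.cosh z) z := by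
        exact ((hasDerivAt_id z).mul (Real.hasDerivAt_cosh z)).sub (Real.hasDerivAt_sinh z)
      rw [this.deriv]; ring
    rw [hd]
    exact mul_nonneg hz (Real.sinh_nonneg_iff.mpr hz)
  have hmono : MonotoneOn (fun t => t * Real.cosh t - Real.sinh t) (Set.Ici 0) := by
    apply monotoneOn_of_deriv_nonneg (convex_Ici 0)
    · exact (Continuous.sub (continuous_id.mul Real.continuous_cosh) Real.continuous_sinh).continuousOn
    · intro z hz
      exact (((differentiable_id.mul Real.differentiable_cosh).sub Real.differentiable_sinh) z).differentiableWithinAt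
    · intro z hz
      exact h z (interior_subset hz)
  have := hmono (Set.self_mem_Ici) hx hx
  simp at this
  linarith

lemma tanh_le_self {x : ℝ} (hx : 0 ≤ x) : Real.tanh x ≤ x := by
  rw [Real.tanh_eq_sinh_div_cosh]
  rw [div_le_iff₀ (Real.cosh_pos x)]
  exact sinh_le_mul_cosh hx

lemma arctan_le_self {t : ℝ} (ht : 0 ≤ t) : Real.arctan t ≤ t := by
  have h1 : 0 ≤ Real.arctan t := by
    rw [← Real.arctan_zero]; exact Real.arctan_strictMono.monotone ht
  have := Real.le_tan h1 (Real.arctan_lt_pi_div_two t)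
  rwa [Real.tan_arctan] at this

lemma tan_le_linear {y : ℝ} (hy0 : 0 ≤ y) (hy1 : y ≤ π / 3) :
    Real.tan y ≤ 3 * Real.sqrt 3 / π * y := by
  have hpi : (0:ℝ) < π := Real.pi_pos
  have hconv : ConvexOn ℝ (Set.Icc 0 (π/3)) Real.tan := by
    have hmono : MonotoneOn (deriv Real.tan) (interior (Set.Icc 0 (π/3))) := by
      intro a ha b hb hab
      rw [interior_Icc] at ha hb
      have hca : 0 < Real.cos a := Real.cos_pos_of_mem_Ioo ⟨by linarith [ha.1], by linarith [ha.2]⟩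
      have hcb : 0 < Real.cos b := Real.cos_pos_of_mem_Ioo ⟨by linarith [hb.1], by linarith [hb.2]⟩
      rw [Real.deriv_tan, Real.deriv_tan]
      have hle : Real.cos b ≤ Real.cos a :=
        Real.cos_le_cos_of_nonneg_of_le_pi (le_of_lt ha.1) (by linarith [hb.2]) hab
      apply div_le_div_of_nonneg_left one_pos.le (by positivity)
      exact pow_le_pow_left₀ hcb.le hle 2
    apply hmono.convexOn_of_deriv (convex_Icc _ _)
    · apply Real.continuousOn_tan.mono
      intro z hz
      simp only [Set.mem_setOf_eq]
      exact ne_of_gt (Real.cos_pos_of_mem_Ioo ⟨by simp at hz; linarith [hz.1], by simp at hz; linarith [hz.2]⟩)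
    · intro z hz
      rw [interior_Icc] at hz
      exact (Real.differentiableAt_tan.mpr
        (ne_of_gt (Real.cos_pos_of_mem_Ioo ⟨by linarith [hz.1], by linarith [hz.2]⟩))).differentiableWithinAt
  -- chord inequality
  have h3 : Real.tan (π/3) = Real.sqrt 3 := Real.tan_pi_div_three
  rcases eq_or_lt_of_le hy1 with h | h
  · rw [h, h3]
    have heq : 3 * Real.sqrt 3 / π * (π/3) = Real.sqrt 3 := by field_simp
    rw [heq]
  · set t := 3 * y / π with ht
    have ht0 : 0 ≤ t := by positivity
    have ht1 : t ≤ 1 := by rw [ht, div_le_one hpi]; linarith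
    have key := hconv.2 (Set.mem_Icc.mpr ⟨le_refl 0, by positivity⟩)
      (Set.mem_Icc.mpr ⟨by positivity, le_refl _⟩)
      (sub_nonneg.mpr ht1) ht0 (by ring : (1 - t) + t = 1)
    have hy : (1 - t) • (0:ℝ) + t • (π/3) = y := by
      rw [ht]; simp only [smul_eq_mul]; field_simp; ring
    rw [hy] at key
    rw [Real.tan_zero, h3] at key
    calc Real.tan y ≤ (1 - t) * 0 + t * Real.sqrt 3 := key
      _ = 3 * Real.sqrt 3 / π * y := by rw [ht]; field_simp; ring

theorem arctan_tanh_tan_le (x y : ℝ) (hx : 0 ≤ x) (hy0 : 0 ≤ y) (hy1 : y ≤ π / 3) :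
    Real.arctan (Real.tanh x * Real.tan y) ≤ (3 * Real.sqrt 3 / π) * x * y := by
  have hpi : (0:ℝ) < π := Real.pi_pos
  have htan0 : 0 ≤ Real.tan y :=
    Real.tan_nonneg_of_nonneg_of_le_pi_div_two hy0 (by linarith)
  have htanh0 : 0 ≤ Real.tanh x := by
    rw [Real.tanh_eq_sinh_div_cosh]
    exact div_nonneg (Real.sinh_nonneg_iff.mpr hx) (Real.cosh_pos x).le
  have h1 : Real.arctan (Real.tanh x * Real.tan y) ≤ Real.tanh x * Real.tan y :=
    arctan_le_self (mul_nonneg htanh0 htan0)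
  have h2 : Real.tanh x * Real.tan y ≤ x * Real.tan y :=
    mul_le_mul_of_nonneg_right (tanh_le_self hx) htan0
  have h3 : x * Real.tan y ≤ x * (3 * Real.sqrt 3 / π * y) :=
    mul_le_mul_of_nonneg_left (tan_le_linear hy0 hy1) hx
  calc Real.arctan (Real.tanh x * Real.tan y) ≤ x * (3 * Real.sqrt 3 / π * y) := by linarith
    _ = 3 * Real.sqrt 3 / π * x * y := by ring
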